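/- Let G be an unmixed bipartite graph with perfect matching {x_1,y_1},...,{x_n,y_n} (x_i ∈ V1, y_i ∈ V2). Then for every j, the induced subgraph of G on N(x_j) ∪ N(y_j) is a complete bipartite graph, i.e., every vertex of N(y_j) is adjacent to every vertex of N(x_j). -/

import Mathlib

open SimpleGraph MvPolynomial

variable {V : Type*}

/-- `s` is an independent set of the graph `G`. -/
def IsIndep (G : SimpleGraph V) (s : Set V) : Prop :=
  s.Pairwise fun a b => ¬ G.Adj a b

/-- `s` is a maximal independent set of the graph `G`. -/
def IsMaxIndep (G : SimpleGraph V) (s : Set V) : Prop :=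
  IsIndep G s ∧ ∀ t : Set V, IsIndep G t → s ⊆ t → s = t

/-- `G` is unmixed: all maximal independent sets have the same cardinality. -/
def Unmixed (G : SimpleGraph V) : Prop :=
  ∀ s t : Set V, IsMaxIndep G s → IsMaxIndep G t → s.ncard = t.ncard

/-- `V1, V2` form a bipartition of the graph `G`. -/
def IsBipartition (G : SimpleGraph V) (V1 V2 : Set V) : Prop :=
  Disjoint V1 V2 ∧ V1 ∪ V2 = Set.univ ∧
    ∀ ⦃a b⦄, G.Adj a b → (a ∈ V1 ∧ b ∈ V2) ∨ (a ∈ V2 ∧ b ∈ V1)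

/-- `G` has no isolated vertices. -/
def NoIsolated (G : SimpleGraph V) : Prop := ∀ v, ∃ w, G.Adj v w

/-- The edges `{x i, y i}` form a perfect matching of `G`. -/
def PMatch (G : SimpleGraph V) (n : ℕ) (x y : Fin n → V) : Prop :=
  Function.Injective x ∧ Function.Injective y ∧ (∀ i j, x i ≠ y j) ∧
    (∀ v, (∃ i, v = x i) ∨ (∃ i, v = y i)) ∧ ∀ i, G.Adj (x i) (y i)

/-- Condition 1: for each `i` the induced subgraph on `N(x i) ∪ N(y i)` is complete
bipartite, i.e. every vertex of `N(y i)` is adjacent to every vertex of `N(x i)`. -/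
def Cond1 (G : SimpleGraph V) (n : ℕ) (x y : Fin n → V) : Prop :=
  ∀ i, ∀ a ∈ G.neighborSet (y i), ∀ b ∈ G.neighborSet (x i), G.Adj a b

/-- Condition 2: for `i ≠ j`, not both `x i ~ y j` and `x j ~ y i`. -/
def Cond2 (G : SimpleGraph V) (n : ℕ) (x y : Fin n → V) : Prop :=
  ∀ i j, i ≠ j → G.Adj (x i) (y j) → ¬ G.Adj (x j) (y i)

/-- In an unmixed bipartite graph with a perfect matching `{x i, y i}`, for every `j`
the induced subgraph on `N(x j) ∪ N(y j)` is complete bipartite. -/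

lemma exists_max_indep_superset {V : Type*} [Fintype V] (G : SimpleGraph V) (S : Set V)
    (hS : IsIndep G S) : ∃ M, S ⊆ M ∧ IsMaxIndep G M := by
  have hfin : {s : Set V | IsIndep G s ∧ S ⊆ s}.Finite := Set.toFinite _
  obtain ⟨M, hM, hmax⟩ := Set.Finite.exists_maximalFor id _ hfin ⟨S, hS, subset_rfl⟩
  exact ⟨M, hM.2, hM.1, fun t ht hst => hst.antisymm (hmax ⟨ht, hM.2.trans hst⟩ hst)⟩

theorem stmt4 [Fintype V] (G : SimpleGraph V) (V1 V2 : Set V)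
    (hb : IsBipartition G V1 V2) {n : ℕ} (x y : Fin n → V)
    (hx : ∀ i, x i ∈ V1) (hy : ∀ i, y i ∈ V2)
    (hm : PMatch G n x y) (hu : Unmixed G) :
    Cond1 G n x y := by
  obtain ⟨hxinj, hyinj, hxy, hcov, hadj⟩ := hm
  obtain ⟨hdisj, huniv, hbip⟩ := hb
  have hxny : ∀ (v : V), v ∈ V1 → ∀ i, v ≠ y i := by
    intro v hv i hvy
    exact Set.disjoint_left.mp hdisj hv (hvy ▸ hy i)
  -- V1 is a maximal independent set of cardinality n
  have hV1indep : IsIndep G V1 := by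
    intro a ha b hb' _ hab
    rcases hbip hab with ⟨_, h2⟩ | ⟨h1, _⟩
    · exact Set.disjoint_left.mp hdisj hb' h2
    · exact Set.disjoint_left.mp hdisj ha h1
  have hV1max : IsMaxIndep G V1 := by
    refine ⟨hV1indep, fun t ht hsub => (Set.Subset.antisymm hsub ?_)⟩
    intro v hv
    by_contra hv1
    rcases hcov v with ⟨i, rfl⟩ | ⟨i, rfl⟩
    · exact hv1 (hx i)
    · exact ht (hsub (hx i)) hv (hxy i i) (hadj i)
  have hV1card : V1.ncard = n := by
    have hr : V1 = Set.range x := by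
      apply Set.Subset.antisymm
      · intro v hv
        rcases hcov v with ⟨i, rfl⟩ | ⟨i, rfl⟩
        · exact ⟨i, rfl⟩
        · exact absurd rfl (hxny _ hv i)
      · rintro v ⟨i, rfl⟩; exact hx i
    rw [hr, ← Set.image_univ, Set.ncard_image_of_injective _ hxinj, Set.ncard_univ,
      Nat.card_eq_fintype_card, Fintype.card_fin]
  -- the main argument
  intro j a ha b hb'
  rw [SimpleGraph.mem_neighborSet] at ha hb'
  -- a = x k for some k
  have haV1 : a ∈ V1 := by
    rcases hbip ha with ⟨h1, _⟩ | ⟨_, h2⟩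
    · exact absurd (hy j) (Set.disjoint_left.mp hdisj h1)
    · exact h2
  obtain ⟨k, rfl⟩ : ∃ k, a = x k := by
    rcases hcov a with h | ⟨i, rfl⟩
    · exact h
    · exact absurd rfl (hxny _ haV1 i)
  have hbV2 : b ∈ V2 := by
    rcases hbip hb' with ⟨_, h2⟩ | ⟨h1, _⟩
    · exact h2
    · exact absurd (hx j) (Set.disjoint_right.mp hdisj h1)
  obtain ⟨l, rfl⟩ : ∃ l, b = y l := by
    rcases hcov b with ⟨i, rfl⟩ | h
    · exact absurd (hx i) (Set.disjoint_right.mp hdisj hbV2)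
    · exact h
  -- trivial cases
  by_cases hkj : k = j
  · subst hkj; exact hb'
  by_cases hlj : l = j
  · subst hlj; exact ha.symm
  by_contra hcon
  -- S = {x k, y l} is independent
  have hSindep : IsIndep G ({x k, y l} : Set V) := by
    intro u hu v hv huv
    rcases hu with rfl | rfl <;> rcases hv with rfl | rfl
    · exact absurd rfl huv
    · exact hcon
    · exact fun h => hcon h.symm
    · exact absurd rfl huv
  obtain ⟨M, hSM, hMindep, hMmax⟩ := exists_max_indep_superset G _ hSindep
  have hMcard : M.ncard = n := by
    rw [hu M V1 ⟨hMindep, hMmax⟩ hV1max, hV1card]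
  -- a choice of index for each vertex
  have hcov' : ∀ v : V, ∃ i, v = x i ∨ v = y i := by
    intro v
    rcases hcov v with ⟨i, h⟩ | ⟨i, h⟩
    · exact ⟨i, Or.inl h⟩
    · exact ⟨i, Or.inr h⟩
  choose φ hφ using hcov'
  have hinj : Set.InjOn φ M := by
    intro u hu v hv huv
    rcases hφ u with h1 | h1 <;> rcases hφ v with h2 | h2 <;> rw [huv] at h1
    · exact h1.trans h2.symm
    · have hne := hxy (φ v) (φ v)
      have hadj' := hadj (φ v)
      rw [← h1, ← h2] at hne hadj'
      exact absurd hadj' (hMindep hu hv hne)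
    · have hne := (hxy (φ v) (φ v)).symm
      have hadj' := (hadj (φ v)).symm
      rw [← h1, ← h2] at hne hadj'
      exact absurd hadj' (hMindep hu hv hne)
    · exact h1.trans h2.symm
  have himg : φ '' M = Set.univ := by
    apply Set.eq_of_subset_of_ncard_le (Set.subset_univ _) _ Set.finite_univ
    rw [Set.ncard_image_of_injOn hinj, hMcard, Set.ncard_univ,
      Nat.card_eq_fintype_card, Fintype.card_fin]
  have hj : j ∈ φ '' M := himg ▸ Set.mem_univ j
  obtain ⟨v, hvM, hvj⟩ := hj
  have hkM : x k ∈ M := hSM (Set.mem_insert _ _)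
  have hlM : y l ∈ M := hSM (Set.mem_insert_of_mem _ rfl)
  have hv := hφ v
  rw [hvj] at hv
  rcases hv with rfl | rfl
  · exact hMindep hvM hlM (hxy j l) hb'
  · exact hMindep hkM hvM (hxy k j) ha.symm
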